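/- For every positive integer n and every integer a with 0 ≤ a ≤ n, there exists an orientation of the n-cube in which every vertex has in-degree a or n − a. Concretely, orienting each edge that flips coordinate i toward the endpoint of even parity when 1 ≤ i ≤ a and toward the endpoint of odd parity when a < i ≤ n gives every even-parity vertex in-degree a and every odd-parity vertex in-degree n − a. -/

import Mathlib

/-- Flip coordinate `i` of a binary `n`-tuple. -/
def flipBit {n : ℕ} (v : Fin n → ZMod 2) (i : Fin n) : Fin n → ZMod 2 :=
  Function.update v i (v i + 1)

/-- An orientation of the `n`-cube: to each edge (a pair of vertices differing in
exactly one coordinate) we assign a head, one of its two endpoints.  The edge at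
vertex `v` in direction `i` joins `v` and `flipBit v i`; `head v i` is the
assigned head of that edge, which must be one of the endpoints and must not
depend on from which endpoint the edge is viewed. -/
structure CubeOrientation (n : ℕ) where
  head : (Fin n → ZMod 2) → Fin n → (Fin n → ZMod 2)
  head_mem : ∀ v i, head v i = v ∨ head v i = flipBit v i
  compatible : ∀ v i, head (flipBit v i) i = head v i

/-- The in-degree of a vertex `v`: the number of edges incident to `v`
whose head is `v`. -/
def CubeOrientation.inDeg {n : ℕ} (o : CubeOrientation n) (v : Fin n → ZMod 2) : ℕ :=
  (Finset.univ.filter fun i : Fin n => o.head v i = v).card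

/-- The parity of a vertex: the sum of its coordinates modulo 2. -/
def parity {n : ℕ} (v : Fin n → ZMod 2) : ZMod 2 := ∑ i, v i

lemma flipBit_ne {n : ℕ} (v : Fin n → ZMod 2) (i : Fin n) : flipBit v i ≠ v := by
  intro h
  have := congrFun h i
  simp [flipBit] at this

lemma flipBit_flipBit {n : ℕ} (v : Fin n → ZMod 2) (i : Fin n) :
    flipBit (flipBit v i) i = v := by
  funext j
  by_cases h : j = i <;> simp [flipBit, Function.update, h]
  subst h
  have : (2 : ZMod 2) = 0 := by decide
  linear_combination this

lemma parity_flipBit {n : ℕ} (v : Fin n → ZMod 2) (i : Fin n) :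
    parity (flipBit v i) = parity v + 1 := by
  unfold parity flipBit
  rw [Finset.sum_update_of_mem (Finset.mem_univ i),
    show (Finset.univ.sum v) = v i + ∑ j ∈ Finset.univ \ {i}, v j from
      Finset.sum_eq_add_sum_sdiff_singleton_of_mem (Finset.mem_univ i) v]
  ring

lemma zmod2_add_one_of_ne {x y : ZMod 2} (h : x ≠ y) : x + 1 = y := by
  revert h; revert x y; decide

lemma card_filter_val_lt (n m : ℕ) (h : m ≤ n) :
    (Finset.univ.filter fun i : Fin n => (i : ℕ) < m).card = m := by
  have key : ((Finset.univ.filter fun i : Fin n => (i : ℕ) < m).map Fin.valEmbedding)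
      = Finset.range m := by
    ext k
    simp only [Finset.mem_map, Finset.mem_filter, Finset.mem_univ, true_and,
      Fin.valEmbedding_apply, Finset.mem_range]
    constructor
    · rintro ⟨i, hi, rfl⟩; exact hi
    · intro hk; exact ⟨⟨k, lt_of_lt_of_le hk h⟩, hk, rfl⟩
  rw [← Finset.card_map Fin.valEmbedding, key, Finset.card_range]

theorem hypercube_complementary_indegrees (n : ℕ) (hn : 0 < n) (a : ℤ)
    (ha0 : 0 ≤ a) (han : a ≤ n) :
    ∃ o : CubeOrientation n,
      (∀ v i, parity (o.head v i) = if (i : ℤ) < a then 0 else 1) ∧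
      (∀ v, parity v = 0 → (o.inDeg v : ℤ) = a) ∧
      (∀ v, parity v = 1 → (o.inDeg v : ℤ) = n - a) := by
  set t : Fin n → ZMod 2 := fun i => if (i : ℤ) < a then 0 else 1 with ht
  set o : CubeOrientation n :=
    ⟨fun v i => if parity v = t i then v else flipBit v i,
     fun v i => by by_cases h : parity v = t i <;> simp [h],
     fun v i => by
      by_cases h : parity v = t i
      · have h2 : parity (flipBit v i) ≠ t i := by
          rw [parity_flipBit, h]; intro hc
          have : (1 : ZMod 2) = 0 := by linear_combination hc
          exact one_ne_zero this
        simp [h, h2, flipBit_flipBit]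
      · have h2 : parity (flipBit v i) = t i := by
          rw [parity_flipBit]; exact zmod2_add_one_of_ne h
        simp [h, h2]⟩ with ho
  have hhead : ∀ v i, parity (o.head v i) = t i := by
    intro v i
    show parity (if parity v = t i then v else flipBit v i) = t i
    by_cases h : parity v = t i
    · simpa [h] using h
    · rw [if_neg h, parity_flipBit]; exact zmod2_add_one_of_ne h
  have hdeg : ∀ v, o.inDeg v = (Finset.univ.filter fun i : Fin n => parity v = t i).card := by
    intro v
    unfold CubeOrientation.inDeg
    congr 1
    apply Finset.filter_congr
    intro i _
    show (if parity v = t i then v else flipBit v i) = v ↔ _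
    by_cases h : parity v = t i
    · simp [h]
    · simp [h, flipBit_ne]
  have hton : a.toNat ≤ n := by omega
  refine ⟨o, hhead, ?_, ?_⟩
  · intro v hv
    have : o.inDeg v = a.toNat := by
      rw [hdeg v, ← card_filter_val_lt n a.toNat hton]
      congr 1
      apply Finset.filter_congr
      intro i _
      rw [hv, ht]
      by_cases h : (i : ℤ) < a <;> simp [h] <;> omega
    rw [this]; omega
  · intro v hv
    have : o.inDeg v = n - a.toNat := by
      rw [hdeg v]
      have := Finset.card_filter_add_card_filter_not
        (s := (Finset.univ : Finset (Fin n))) (p := fun i : Fin n => (i : ℕ) < a.toNat)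
      rw [card_filter_val_lt n a.toNat hton, Finset.card_univ, Fintype.card_fin] at this
      have heq : (Finset.univ.filter fun i : Fin n => parity v = t i)
          = (Finset.univ.filter fun i : Fin n => ¬ (i : ℕ) < a.toNat) := by
        apply Finset.filter_congr
        intro i _
        rw [hv, ht]
        by_cases h : (i : ℤ) < a <;> simp [h] <;> omega
      rw [heq]; omega
    rw [this]; omega
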